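/- Let ω be the standard symplectic form on F_q^{2d}. If U and W are two independently and uniformly chosen maximal (d-dimensional) isotropic subspaces of F_q^{2d}, then U ∩ W = {0} with probability at least 1 − 4/q. -/

import Mathlib

open Module

def sympForm (F : Type) [Field F] (d : ℕ) (x y : (Fin d ⊕ Fin d) → F) : F :=
  ∑ i : Fin d, (x (Sum.inl i) * y (Sum.inr i) - x (Sum.inr i) * y (Sum.inl i))

def IsIsotropic (F : Type) [Field F] (d : ℕ)
    (W : Submodule F ((Fin d ⊕ Fin d) → F)) : Prop :=
  ∀ x ∈ W, ∀ y ∈ W, sympForm F d x y = 0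

section Symp
variable (F : Type) [Field F] (d : ℕ)

abbrev VV := (Fin d ⊕ Fin d) → F

noncomputable def sB : LinearMap.BilinForm F (VV F d) :=
  LinearMap.mk₂ F (sympForm F d)
    (fun x x' y => by
      unfold sympForm; rw [← Finset.sum_add_distrib]
      exact Finset.sum_congr rfl fun i _ => by simp only [Pi.add_apply]; ring)
    (fun c x y => by
      unfold sympForm; rw [smul_eq_mul, Finset.mul_sum]
      exact Finset.sum_congr rfl fun i _ => by simp only [Pi.smul_apply, smul_eq_mul]; ring)
    (fun x y y' => by
      unfold sympForm; rw [← Finset.sum_add_distrib]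
      exact Finset.sum_congr rfl fun i _ => by simp only [Pi.add_apply]; ring)
    (fun c x y => by
      unfold sympForm; rw [smul_eq_mul, Finset.mul_sum]
      exact Finset.sum_congr rfl fun i _ => by simp only [Pi.smul_apply, smul_eq_mul]; ring)

variable {F d}

lemma sB_apply (x y : VV F d) : sB F d x y = sympForm F d x y := rfl

lemma sB_alt (x : VV F d) : sB F d x x = 0 := by
  rw [sB_apply]; unfold sympForm
  rw [← Finset.sum_const_zero (s := (Finset.univ : Finset (Fin d)))]
  exact Finset.sum_congr rfl fun i _ => by ring

lemma sB_skew (x y : VV F d) : sB F d x y = - sB F d y x := by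
  rw [sB_apply, sB_apply]; unfold sympForm
  rw [← Finset.sum_neg_distrib]
  exact Finset.sum_congr rfl fun i _ => by ring

lemma sB_refl : (sB F d).IsRefl := fun x y h => by
  have := sB_skew y x; rw [this, h, neg_zero]

lemma sB_nondeg : (sB F d).Nondegenerate := by
  suffices h : (sB F d).SeparatingLeft from
    ⟨h, fun y hy => h y (fun x => by rw [sB_skew, hy x, neg_zero])⟩
  intro x hx
  funext i
  rcases i with i | i
  · have := hx (Pi.single (Sum.inr i) 1)
    rw [sB_apply] at this; unfold sympForm at this
    simpa [Pi.single_apply, Finset.sum_ite_eq'] using this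
  · have := hx (Pi.single (Sum.inl i) 1)
    rw [sB_apply] at this; unfold sympForm at this
    simpa [Pi.single_apply, Finset.sum_ite_eq'] using this

lemma finrank_VV : finrank F (VV F d) = 2 * d := by
  simp [VV, Module.finrank_pi]
  ring

end Symp

section Geom
variable {F : Type} [Field F] [Fintype F] {d : ℕ}

set_option linter.unusedSectionVars false

lemma orth_mem {k : ℕ} {w : Fin k → VV F d} {v : VV F d} (h : ∀ i, sB F d (w i) v = 0) :
    v ∈ (sB F d).orthogonal (Submodule.span F (Set.range w)) := by
  intro n hn
  induction hn using Submodule.span_induction with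
  | mem x hx => obtain ⟨i, rfl⟩ := hx; exact h i
  | zero => simp [LinearMap.BilinForm.IsOrtho]
  | add x y _ _ hx hy => simp_all [LinearMap.BilinForm.IsOrtho, LinearMap.BilinForm.add_left]
  | smul c x _ hx => simp_all [LinearMap.BilinForm.IsOrtho, LinearMap.BilinForm.smul_left]

lemma span_le_orth {k : ℕ} {w : Fin k → VV F d} (h : ∀ i j, sB F d (w i) (w j) = 0) :
    Submodule.span F (Set.range w) ≤ (sB F d).orthogonal (Submodule.span F (Set.range w)) := by
  rw [Submodule.span_le]
  rintro _ ⟨j, rfl⟩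
  exact orth_mem (fun i => h i j)

lemma orth_finrank (W : Submodule F (VV F d)) :
    finrank F ((sB F d).orthogonal W) = 2 * d - finrank F W := by
  rw [LinearMap.BilinForm.finrank_orthogonal sB_nondeg, finrank_VV]

lemma lagr_orth_eq {U : Submodule F (VV F d)} (hiso : IsIsotropic F d U)
    (hrank : finrank F U = d) : (sB F d).orthogonal U = U := by
  have hle : U ≤ (sB F d).orthogonal U := fun u hu n hn => hiso n hn u hu
  have h1 : finrank F ((sB F d).orthogonal U) = d := by
    rw [orth_finrank, hrank]; omega
  exact (Submodule.eq_of_le_of_finrank_le hle (by rw [h1, hrank])).symm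

lemma orth_sup (U W : Submodule F (VV F d)) :
    (sB F d).orthogonal (U ⊔ W) = (sB F d).orthogonal U ⊓ (sB F d).orthogonal W := by
  ext x
  simp only [LinearMap.BilinForm.mem_orthogonal_iff, Submodule.mem_inf]
  constructor
  · exact fun h => ⟨fun n hn => h n (Submodule.mem_sup_left hn),
      fun n hn => h n (Submodule.mem_sup_right hn)⟩
  · rintro ⟨h1, h2⟩ n hn
    obtain ⟨u, hu, v, hv, rfl⟩ := Submodule.mem_sup.1 hn
    have := h1 u hu
    have := h2 v hv
    rw [LinearMap.BilinForm.add_left]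
    simp_all

lemma key_dim {U : Submodule F (VV F d)} (hiso : IsIsotropic F d U)
    (hrank : finrank F U = d) {k : ℕ} (hk : k ≤ d) {w : Fin k → VV F d}
    (hw : LinearIndependent F w) (hpair : ∀ i j, sB F d (w i) (w j) = 0)
    (hdisj : Disjoint U (Submodule.span F (Set.range w))) :
    finrank F (((U ⊔ Submodule.span F (Set.range w)) ⊓
      (sB F d).orthogonal (Submodule.span F (Set.range w)) : Submodule F (VV F d))) = d := by
  set W := Submodule.span F (Set.range w) with hW
  have ha : finrank F W = k := by
    rw [hW, finrank_span_eq_card hw, Fintype.card_fin]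
  have hb : finrank F ((sB F d).orthogonal W) = 2 * d - k := by rw [orth_finrank, ha]
  have hc : finrank F ((U ⊔ W : Submodule F (VV F d))) = d + k := by
    have := Submodule.finrank_sup_add_finrank_inf_eq U W
    rw [disjoint_iff.1 hdisj, finrank_bot, hrank, ha] at this
    omega
  have hd : finrank F ((U ⊓ (sB F d).orthogonal W : Submodule F (VV F d))) = d - k := by
    rw [← lagr_orth_eq hiso hrank, ← orth_sup, orth_finrank, hc]
    omega
  have he : finrank F ((U ⊔ (sB F d).orthogonal W : Submodule F (VV F d))) = 2 * d := by
    have h2 := Submodule.finrank_sup_add_finrank_inf_eq U ((sB F d).orthogonal W)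
    rw [hd, hrank, hb] at h2
    have hle : finrank F ((U ⊔ (sB F d).orthogonal W : Submodule F (VV F d))) ≤ 2 * d := by
      have := Submodule.finrank_le (R := F) (U ⊔ (sB F d).orthogonal W)
      rwa [finrank_VV] at this
    omega
  have hsup : ((U ⊔ W) ⊔ (sB F d).orthogonal W : Submodule F (VV F d)) =
      U ⊔ (sB F d).orthogonal W := by
    rw [sup_assoc, sup_eq_right.2 (span_le_orth hpair)]
  have h3 := Submodule.finrank_sup_add_finrank_inf_eq (U ⊔ W) ((sB F d).orthogonal W)
  rw [hsup, he, hc, hb] at h3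
  omega

lemma key_dim_bot {k : ℕ} {w : Fin k → VV F d}
    (hw : LinearIndependent F w) (hpair : ∀ i j, sB F d (w i) (w j) = 0) :
    finrank F ((((⊥ : Submodule F (VV F d)) ⊔ Submodule.span F (Set.range w)) ⊓
      (sB F d).orthogonal (Submodule.span F (Set.range w)) : Submodule F (VV F d))) = k := by
  rw [bot_sup_eq, inf_eq_left.2 (span_le_orth hpair), finrank_span_eq_card hw, Fintype.card_fin]

end Geom

section Frames
set_option linter.unusedSectionVars false
variable {F : Type} [Field F] [Fintype F] {d : ℕ}

/-- Isotropic frames of length `k` transverse to `U`. -/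
def Fr (F : Type) [Field F] [Fintype F] (d : ℕ) (U : Submodule F (VV F d)) (k : ℕ) :=
  { w : Fin k → VV F d // LinearIndependent F w ∧ (∀ i j, sB F d (w i) (w j) = 0) ∧
      Disjoint U (Submodule.span F (Set.range w)) }

/-- Valid extensions of a frame. -/
def FExt (F : Type) [Field F] [Fintype F] (d : ℕ) (U : Submodule F (VV F d)) {k : ℕ}
    (w : Fin k → VV F d) :=
  { v : VV F d // v ∈ (sB F d).orthogonal (Submodule.span F (Set.range w)) ∧
      v ∉ U ⊔ Submodule.span F (Set.range w) }

lemma range_snoc' {k : ℕ} {α : Type} (w : Fin k → α) (v : α) :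
    Set.range (Fin.snoc w v : Fin (k+1) → α) = insert v (Set.range w) := by
  ext x
  constructor
  · rintro ⟨i, rfl⟩
    refine Fin.lastCases ?_ ?_ i
    · left; rw [Fin.snoc_last]
    · intro i'; right; exact ⟨i', (Fin.snoc_castSucc ..).symm ▸ rfl⟩
  · rintro (rfl | ⟨i, rfl⟩)
    · exact ⟨Fin.last k, Fin.snoc_last ..⟩
    · exact ⟨i.castSucc, Fin.snoc_castSucc ..⟩

lemma snoc_frame {U : Submodule F (VV F d)} {k : ℕ} {w : Fin k → VV F d}
    (hw : LinearIndependent F w) (hpair : ∀ i j, sB F d (w i) (w j) = 0)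
    (hdisj : Disjoint U (Submodule.span F (Set.range w)))
    {v : VV F d} (hv1 : v ∈ (sB F d).orthogonal (Submodule.span F (Set.range w)))
    (hv2 : v ∉ U ⊔ Submodule.span F (Set.range w)) :
    LinearIndependent F (Fin.snoc w v : Fin (k+1) → VV F d) ∧
      (∀ i j, sB F d ((Fin.snoc w v : Fin (k+1) → VV F d) i)
        ((Fin.snoc w v : Fin (k+1) → VV F d) j) = 0) ∧
      Disjoint U (Submodule.span F (Set.range (Fin.snoc w v : Fin (k+1) → VV F d))) := by
  have hvW : v ∉ Submodule.span F (Set.range w) :=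
    fun h => hv2 (Submodule.mem_sup_right h)
  have horth : ∀ x ∈ Submodule.span F (Set.range w), sB F d x v = 0 := fun x hx => hv1 x hx
  refine ⟨linearIndependent_fin_snoc.2 ⟨hw, hvW⟩, ?_, ?_⟩
  · intro i j
    refine Fin.lastCases ?_ ?_ i <;> [skip; intro i'] <;>
      refine Fin.lastCases ?_ ?_ j <;> try intro j'
    · simp only [Fin.snoc_last]; exact sB_alt v
    · simp only [Fin.snoc_last, Fin.snoc_castSucc]
      exact sB_refl _ _ (horth (w j') (Submodule.subset_span ⟨j', rfl⟩))
    · simp only [Fin.snoc_last, Fin.snoc_castSucc]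
      exact horth (w i') (Submodule.subset_span ⟨i', rfl⟩)
    · simp only [Fin.snoc_castSucc]; exact hpair i' j'
  · rw [range_snoc', Submodule.span_insert]
    rw [disjoint_iff] at hdisj ⊢
    rw [eq_bot_iff]
    rintro x ⟨hxU, hxs⟩
    obtain ⟨y, hy, z, hz, rfl⟩ := Submodule.mem_sup.1 hxs
    obtain ⟨c, rfl⟩ := Submodule.mem_span_singleton.1 hy
    rcases eq_or_ne c 0 with rfl | hc
    · rw [zero_smul, zero_add] at *
      exact hdisj ▸ Submodule.mem_inf.2 ⟨hxU, hz⟩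
    · exfalso
      apply hv2
      have : v = c⁻¹ • (c • v + z - z) := by
        rw [add_sub_cancel_right, smul_smul, inv_mul_cancel₀ hc, one_smul]
      rw [this]
      exact Submodule.smul_mem _ _ (Submodule.sub_mem _ (Submodule.mem_sup_left hxU)
        (Submodule.mem_sup_right hz))

lemma init_frame {U : Submodule F (VV F d)} {k : ℕ} {w : Fin (k + 1) → VV F d}
    (hw : LinearIndependent F w) (hpair : ∀ i j, sB F d (w i) (w j) = 0)
    (hdisj : Disjoint U (Submodule.span F (Set.range w))) :
    (LinearIndependent F (Fin.init w) ∧ (∀ i j, sB F d (Fin.init w i) (Fin.init w j) = 0) ∧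
      Disjoint U (Submodule.span F (Set.range (Fin.init w)))) ∧
      (w (Fin.last k) ∈ (sB F d).orthogonal (Submodule.span F (Set.range (Fin.init w))) ∧
        w (Fin.last k) ∉ U ⊔ Submodule.span F (Set.range (Fin.init w))) := by
  have hsnoc : LinearIndependent F (Fin.snoc (Fin.init w) (w (Fin.last k)) : Fin (k+1) → VV F d) := by
    rwa [Fin.snoc_init_self]
  rw [linearIndependent_fin_snoc] at hsnoc
  have hrange : Set.range (Fin.init w) ⊆ Set.range w := by
    rintro _ ⟨i, rfl⟩; exact ⟨i.castSucc, rfl⟩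
  have hspanle : Submodule.span F (Set.range (Fin.init w)) ≤ Submodule.span F (Set.range w) :=
    Submodule.span_mono hrange
  refine ⟨⟨hsnoc.1, fun i j => hpair _ _, hdisj.mono_right hspanle⟩, ?_, ?_⟩
  · exact orth_mem (fun i => hpair i.castSucc (Fin.last k))
  · intro h
    obtain ⟨u, hu, x, hx, hux⟩ := Submodule.mem_sup.1 h
    have hvmem : w (Fin.last k) ∈ Submodule.span F (Set.range w) :=
      Submodule.subset_span ⟨Fin.last k, rfl⟩
    have hu2 : u ∈ Submodule.span F (Set.range w) := by
      have : u = w (Fin.last k) - x := by rw [← hux]; ring_nf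
      rw [this]
      exact Submodule.sub_mem _ hvmem (hspanle hx)
    have : u = 0 := by
      have := disjoint_iff.1 hdisj ▸ Submodule.mem_inf.2 ⟨hu, hu2⟩
      simpa using this
    rw [this, zero_add] at hux
    exact hsnoc.2 (hux ▸ hx)

/-- The structure equivalence: frames of length `k+1` are frames of length `k`
together with a valid extension. -/
def frEquiv (U : Submodule F (VV F d)) (k : ℕ) :
    Fr F d U (k + 1) ≃ Σ s : Fr F d U k, FExt F d U s.1 where
  toFun s := ⟨⟨Fin.init s.1, (init_frame s.2.1 s.2.2.1 s.2.2.2).1⟩,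
    ⟨s.1 (Fin.last k), (init_frame s.2.1 s.2.2.1 s.2.2.2).2⟩⟩
  invFun p := ⟨Fin.snoc p.1.1 p.2.1, snoc_frame p.1.2.1 p.1.2.2.1 p.1.2.2.2 p.2.2.1 p.2.2.2⟩
  left_inv s := Subtype.ext (Fin.snoc_init_self s.1)
  right_inv := fun ⟨⟨s, hs⟩, ⟨v, hv⟩⟩ => by
    simp only [Sigma.mk.inj_iff, Subtype.mk.injEq, Fin.init_snoc, Fin.snoc_last, heq_eq_eq,
      and_true, true_and]
    have h : Fin.init (Fin.snoc s v : Fin (k+1) → VV F d) = s := Fin.init_snoc ..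
    refine Sigma.ext (Subtype.ext h) ?_
    exact (Subtype.heq_iff_coe_eq (fun x => by dsimp only; rw [h])).2 rfl
end Frames

section Counting
set_option linter.unusedSectionVars false
variable {F : Type} [Field F] [Fintype F] {d : ℕ}

instance {U : Submodule F (VV F d)} {k : ℕ} : Finite (Fr F d U k) := by
  unfold Fr; exact Subtype.finite

instance {U : Submodule F (VV F d)} {k : ℕ} {w : Fin k → VV F d} : Finite (FExt F d U w) := by
  unfold FExt; exact Subtype.finite

lemma card_submodule (P : Submodule F (VV F d)) :
    Nat.card P = Fintype.card F ^ finrank F P := by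
  have : Fintype P := Fintype.ofFinite _
  rw [Nat.card_eq_fintype_card, card_eq_pow_finrank (K := F)]

lemma card_FExt {U : Submodule F (VV F d)} {k : ℕ} (w : Fin k → VV F d) :
    Nat.card (FExt F d U w) =
      Fintype.card F ^ finrank F ((sB F d).orthogonal (Submodule.span F (Set.range w)))
        - Fintype.card F ^
          finrank F (((U ⊔ Submodule.span F (Set.range w)) ⊓
            (sB F d).orthogonal (Submodule.span F (Set.range w)) : Submodule F (VV F d))) := by
  classical
  set W := Submodule.span F (Set.range w)
  set O := (sB F d).orthogonal W
  set S := U ⊔ W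
  have e1 : FExt F d U w ≃ {y : O // ¬ ((y : VV F d) ∈ S)} :=
    { toFun := fun v => ⟨⟨v.1, v.2.1⟩, v.2.2⟩
      invFun := fun y => ⟨y.1.1, y.1.2, y.2⟩
      left_inv := fun v => rfl
      right_inv := fun y => rfl }
  have e2 : {y : O // ((y : VV F d) ∈ S)} ≃ (S ⊓ O : Submodule F (VV F d)) :=
    { toFun := fun y => ⟨y.1.1, y.2, y.1.2⟩
      invFun := fun x => ⟨⟨x.1, x.2.2⟩, x.2.1⟩
      left_inv := fun y => rfl
      right_inv := fun x => rfl }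
  have : Fintype O := Fintype.ofFinite _
  rw [Nat.card_congr e1, Nat.card_eq_fintype_card, Fintype.card_subtype_compl,
    ← Nat.card_eq_fintype_card, ← Nat.card_eq_fintype_card, Nat.card_congr e2,
    card_submodule, card_submodule]

lemma card_Fr_zero (U : Submodule F (VV F d)) : Nat.card (Fr F d U 0) = 1 := by
  have : Unique (Fr F d U 0) :=
    { default := ⟨Fin.elim0, linearIndependent_empty_type, fun i => i.elim0,
        by rw [Set.range_eq_empty, Submodule.span_empty]; exact disjoint_bot_right⟩
      uniq := fun s => Subtype.ext (Subsingleton.elim _ _) }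
  exact Nat.card_unique

lemma card_Fr (U : Submodule F (VV F d)) (c : ℕ → ℕ) (n : ℕ)
    (hc : ∀ k, k < n → ∀ s : Fr F d U k, Nat.card (FExt F d U s.1) = c k) :
    Nat.card (Fr F d U n) = ∏ i ∈ Finset.range n, c i := by
  classical
  induction n with
  | zero => simpa using card_Fr_zero U
  | succ k ih =>
    have : Fintype (Fr F d U k) := Fintype.ofFinite _
    have hfe : ∀ s : Fr F d U k, Fintype (FExt F d U s.1) := fun s => Fintype.ofFinite _
    rw [Nat.card_congr (frEquiv U k), Nat.card_eq_fintype_card]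
    rw [Fintype.card_sigma]
    have : ∀ s : Fr F d U k, Fintype.card (FExt F d U s.1) = c k := fun s => by
      rw [← Nat.card_eq_fintype_card]; exact hc k (Nat.lt_succ_self k) s
    rw [Finset.sum_congr rfl (fun s _ => this s), Finset.sum_const, smul_eq_mul,
      Finset.card_univ, ← Nat.card_eq_fintype_card,
      ih (fun m hm => hc m (Nat.lt_succ_of_lt hm)), Finset.prod_range_succ]
    try ring

lemma card_Fr_lagr {U : Submodule F (VV F d)} (hiso : IsIsotropic F d U)
    (hrank : finrank F U = d) :
    Nat.card (Fr F d U d) =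
      ∏ i ∈ Finset.range d, (Fintype.card F ^ (2 * d - i) - Fintype.card F ^ d) := by
  apply card_Fr
  intro k hk s
  rw [card_FExt s.1, orth_finrank, finrank_span_eq_card s.2.1, Fintype.card_fin,
    key_dim hiso hrank (le_of_lt hk) s.2.1 s.2.2.1 s.2.2.2]

lemma card_Fr_bot' :
    Nat.card (Fr F d (⊥ : Submodule F (VV F d)) d) =
      ∏ i ∈ Finset.range d, (Fintype.card F ^ (2 * d - i) - Fintype.card F ^ i) := by
  apply card_Fr
  intro k hk s
  rw [card_FExt s.1, orth_finrank, finrank_span_eq_card s.2.1, Fintype.card_fin,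
    key_dim_bot s.2.1 s.2.2.1]

end Counting

section Spans
set_option linter.unusedSectionVars false
variable {F : Type} [Field F] [Fintype F] {d : ℕ}

lemma span_isotropic {k : ℕ} {w : Fin k → VV F d} (h : ∀ i j, sB F d (w i) (w j) = 0) :
    IsIsotropic F d (Submodule.span F (Set.range w)) :=
  fun x hx y hy => span_le_orth h hy x hx

instance : Finite (Submodule F (VV F d)) :=
  Finite.of_injective (fun W => (W : Set (VV F d))) SetLike.coe_injective

/-- Maximal isotropic subspaces transverse to `U`. -/
def LagT (F : Type) [Field F] [Fintype F] (d : ℕ) (U : Submodule F (VV F d)) :=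
  { W : Submodule F (VV F d) // IsIsotropic F d W ∧ finrank F W = d ∧ Disjoint U W }

instance {U : Submodule F (VV F d)} : Finite (LagT F d U) := by
  unfold LagT; exact Subtype.finite

/-- The map sending a frame to its span. -/
def frSpan (U : Submodule F (VV F d)) (s : Fr F d U d) : LagT F d U :=
  ⟨Submodule.span F (Set.range s.1), span_isotropic s.2.2.1,
    by rw [finrank_span_eq_card s.2.1, Fintype.card_fin], s.2.2.2⟩

def fiberEquiv (U : Submodule F (VV F d)) (W : LagT F d U) :
    { s : Fr F d U d // frSpan U s = W } ≃ { t : Fin d → W.1 // LinearIndependent F t } where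
  toFun sp := ⟨fun i => ⟨sp.1.1 i, by
      have : Submodule.span F (Set.range sp.1.1) = W.1 := congrArg Subtype.val sp.2
      exact this ▸ Submodule.subset_span ⟨i, rfl⟩⟩,
    LinearIndependent.of_comp W.1.subtype (by exact sp.1.2.1)⟩
  invFun t := ⟨⟨fun i => (t.1 i : VV F d),
      (t.2.map' W.1.subtype (Submodule.ker_subtype W.1) : _),
      fun i j => W.2.1 _ (t.1 i).2 _ (t.1 j).2,
      W.2.2.2.mono_right (Submodule.span_le.2 (by rintro _ ⟨i, rfl⟩; exact (t.1 i).2))⟩,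
    by
      apply Subtype.ext
      show Submodule.span F (Set.range fun i => ((t.1 i : VV F d))) = W.1
      have hle : Submodule.span F (Set.range fun i => ((t.1 i : VV F d))) ≤ W.1 :=
        Submodule.span_le.2 (by rintro _ ⟨i, rfl⟩; exact (t.1 i).2)
      have hind : LinearIndependent F (fun i => ((t.1 i : VV F d))) :=
        (t.2.map' W.1.subtype (Submodule.ker_subtype W.1) : _)
      refine Submodule.eq_of_le_of_finrank_le hle ?_
      rw [finrank_span_eq_card hind, Fintype.card_fin, W.2.2.1]⟩
  left_inv sp := Subtype.ext (Subtype.ext rfl)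
  right_inv t := Subtype.ext (funext fun i => Subtype.ext rfl)

lemma card_Fr_eq (U : Submodule F (VV F d)) :
    Nat.card (Fr F d U d) =
      Nat.card (LagT F d U) *
        ∏ i : Fin d, (Fintype.card F ^ d - Fintype.card F ^ (i : ℕ)) := by
  classical
  have : Fintype (LagT F d U) := Fintype.ofFinite _
  have : Fintype (Fr F d U d) := Fintype.ofFinite _
  rw [Nat.card_eq_fintype_card (α := Fr F d U d), ← Finset.card_univ,
    Finset.card_eq_sum_card_fiberwise (f := frSpan U) (t := Finset.univ)
      (fun x _ => Finset.mem_univ _)]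
  have hW : ∀ W : LagT F d U, (Finset.univ.filter (fun s => frSpan U s = W)).card =
      ∏ i : Fin d, (Fintype.card F ^ d - Fintype.card F ^ (i : ℕ)) := by
    intro W
    rw [← Fintype.card_subtype, ← Nat.card_eq_fintype_card, Nat.card_congr (fiberEquiv U W)]
    have hfin : finrank F W.1 = d := W.2.2.1
    have := card_linearIndependent (K := F) (V := W.1) (k := d) (by rw [hfin])
    rw [this, hfin]
  rw [Finset.sum_congr rfl (fun W _ => hW W), Finset.sum_const, smul_eq_mul, Finset.card_univ,
    Nat.card_eq_fintype_card]

end Spans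

section Num
open Finset

lemma weier {ι : Type} (s : Finset ι) (f : ι → ℝ) (h0 : ∀ i ∈ s, 0 ≤ f i)
    (h1 : ∀ i ∈ s, f i ≤ 1) :
    1 - ∑ i ∈ s, f i ≤ ∏ i ∈ s, (1 - f i) := by
  classical
  induction s using Finset.cons_induction with
  | empty => simp
  | cons a s ha ih =>
    rw [Finset.prod_cons, Finset.sum_cons]
    have h0a := h0 a (Finset.mem_cons_self a s)
    have h1a := h1 a (Finset.mem_cons_self a s)
    have ihs := ih (fun i hi => h0 i (Finset.mem_cons_of_mem hi))
      (fun i hi => h1 i (Finset.mem_cons_of_mem hi))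
    have hs0 : 0 ≤ ∑ i ∈ s, f i := Finset.sum_nonneg fun i hi => h0 i (Finset.mem_cons_of_mem hi)
    nlinarith [mul_le_mul_of_nonneg_left ihs (by linarith : (0:ℝ) ≤ 1 - f a)]

lemma pointwise_num {r : ℝ} (hr : 2 ≤ r) {d i : ℕ} (hi : i < d) :
    (1 - 2 * r ^ i / r ^ d) * (r ^ (2 * d - i) - r ^ i) ≤ r ^ (2 * d - i) - r ^ d := by
  have hr0 : (0:ℝ) < r := by linarith
  have e1 : d = i + (d - i) := by omega
  have e2 : 2 * d - i = d + (d - i) := by omega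
  set a := r ^ i with hadef
  set c := r ^ (d - i) with hcdef
  have ha : 0 < a := pow_pos hr0 i
  have hba : r ^ d = a * c := by rw [hadef, hcdef, ← pow_add, ← e1]
  have h2d : r ^ (2 * d - i) = r ^ d * c := by rw [hcdef, ← pow_add, ← e2]
  have hb : (0:ℝ) < r ^ d := pow_pos hr0 d
  have hc2 : 2 ≤ c := le_trans hr (le_self_pow₀ (by linarith) (by omega))
  have hdiv : 1 - 2 * a / r ^ d = (r ^ d - 2 * a) / r ^ d := by field_simp
  rw [hdiv, h2d, div_mul_eq_mul_div, div_le_iff₀ hb]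
  nlinarith [sq_nonneg a, mul_pos ha ha, hc2, hba]

lemma sum_geom_bound {r : ℝ} (hr : 2 ≤ r) (d : ℕ) :
    ∑ i ∈ Finset.range d, 2 * r ^ i / r ^ d ≤ 4 / r := by
  have hr0 : (0:ℝ) < r := by linarith
  have hr1 : (1:ℝ) < r := by linarith
  have hb : (0:ℝ) < r ^ d := pow_pos hr0 d
  have hbd : ∑ i ∈ Finset.range d, r ^ i ≤ r ^ d / (r - 1) := by
    rw [geom_sum_eq hr1.ne']
    gcongr
    · linarith
  have hrw : ∑ i ∈ Finset.range d, 2 * r ^ i / r ^ d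
      = (2 / r ^ d) * ∑ i ∈ Finset.range d, r ^ i := by
    rw [Finset.mul_sum]
    exact Finset.sum_congr rfl fun i _ => by field_simp
  rw [hrw]
  have h1 : (2 / r ^ d) * ∑ i ∈ Finset.range d, r ^ i ≤ (2 / r ^ d) * (r ^ d / (r - 1)) :=
    mul_le_mul_of_nonneg_left hbd (by positivity)
  have h2 : (2 / r ^ d) * (r ^ d / (r - 1)) = 2 / (r - 1) := by
    field_simp
  have h3 : 2 / (r - 1) ≤ 4 / r := by
    rw [div_le_div_iff₀ (by linarith) hr0]
    linarith
  linarith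

lemma num_ineq {r : ℝ} (hr : 2 ≤ r) (d : ℕ) :
    (1 - 4 / r) * ∏ i ∈ Finset.range d, (r ^ (2 * d - i) - r ^ i)
      ≤ ∏ i ∈ Finset.range d, (r ^ (2 * d - i) - r ^ d) := by
  have hr0 : (0:ℝ) < r := by linarith
  have hfacts : ∀ i ∈ Finset.range d, r ^ i ≤ r ^ d ∧ r ^ d ≤ r ^ (2 * d - i) ∧
      0 ≤ 2 * r ^ i / r ^ d ∧ 2 * r ^ i / r ^ d ≤ 1 := by
    intro i hi
    rw [Finset.mem_range] at hi
    have h1 : r ^ i ≤ r ^ d := pow_le_pow_right₀ (by linarith) (by omega)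
    have h2 : r ^ d ≤ r ^ (2 * d - i) := pow_le_pow_right₀ (by linarith) (by omega)
    have hb : (0:ℝ) < r ^ d := pow_pos hr0 d
    refine ⟨h1, h2, by positivity, ?_⟩
    rw [div_le_one hb]
    calc 2 * r ^ i ≤ r * r ^ i := by nlinarith [pow_pos hr0 i]
    _ = r ^ (i + 1) := by ring
    _ ≤ r ^ d := pow_le_pow_right₀ (by linarith) (by omega)
  set f : ℕ → ℝ := fun i => 2 * r ^ i / r ^ d with hf
  calc (1 - 4 / r) * ∏ i ∈ Finset.range d, (r ^ (2 * d - i) - r ^ i)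
      ≤ (1 - ∑ i ∈ Finset.range d, f i) * ∏ i ∈ Finset.range d, (r ^ (2 * d - i) - r ^ i) := by
        apply mul_le_mul_of_nonneg_right
        · have := sum_geom_bound hr d
          simp only [hf]; linarith
        · exact Finset.prod_nonneg fun i hi => by
            have := hfacts i hi; linarith [this.1, this.2.1]
    _ ≤ (∏ i ∈ Finset.range d, (1 - f i)) * ∏ i ∈ Finset.range d, (r ^ (2 * d - i) - r ^ i) := by
        apply mul_le_mul_of_nonneg_right
        · exact weier _ _ (fun i hi => (hfacts i hi).2.2.1) (fun i hi => (hfacts i hi).2.2.2)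
        · exact Finset.prod_nonneg fun i hi => by
            have := hfacts i hi; linarith [this.1, this.2.1]
    _ = ∏ i ∈ Finset.range d, ((1 - f i) * (r ^ (2 * d - i) - r ^ i)) := by
        rw [Finset.prod_mul_distrib]
    _ ≤ ∏ i ∈ Finset.range d, (r ^ (2 * d - i) - r ^ d) := by
        apply Finset.prod_le_prod
        · intro i hi
          have h := hfacts i hi
          have : 0 ≤ 1 - f i := by linarith [h.2.2.2]
          have : 0 ≤ r ^ (2 * d - i) - r ^ i := by linarith [h.1, h.2.1]
          positivity
        · intro i hi
          exact pointwise_num hr (Finset.mem_range.1 hi)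

end Num
lemma nat_card_sigma {ι : Type} [Fintype ι] (g : ι → Type) [∀ i, Finite (g i)] :
    Nat.card (Σ i, g i) = ∑ i : ι, Nat.card (g i) := by
  letI : ∀ i, Fintype (g i) := fun i => Fintype.ofFinite _
  rw [Nat.card_eq_fintype_card, Fintype.card_sigma]
  exact Finset.sum_congr rfl fun i _ => (Nat.card_eq_fintype_card).symm

section Final
set_option linter.unusedSectionVars false
set_option maxHeartbeats 1000000

theorem stmt7 (q d : ℕ) (F : Type) [Field F] [Fintype F]
    (hq : Fintype.card F = q) :
    (1 - 4 / (q : ℝ)) *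
        (Nat.card {P : Submodule F ((Fin d ⊕ Fin d) → F) ×
            Submodule F ((Fin d ⊕ Fin d) → F) //
          IsIsotropic F d P.1 ∧ finrank F P.1 = d ∧
          IsIsotropic F d P.2 ∧ finrank F P.2 = d} : ℝ)
      ≤ (Nat.card {P : Submodule F ((Fin d ⊕ Fin d) → F) ×
            Submodule F ((Fin d ⊕ Fin d) → F) //
          (IsIsotropic F d P.1 ∧ finrank F P.1 = d ∧
           IsIsotropic F d P.2 ∧ finrank F P.2 = d) ∧ P.1 ⊓ P.2 = ⊥} : ℝ) := by
  classical
  subst hq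
  set q := Fintype.card F with hqdef
  have hq2 : 2 ≤ q := Fintype.one_lt_card
  set p : Submodule F (VV F d) → Prop :=
    fun W => IsIsotropic F d W ∧ finrank F W = d with hp
  set L : ℕ := Nat.card {W : Submodule F (VV F d) // p W} with hLdef
  set Bd : ℕ := ∏ i : Fin d, (q ^ d - q ^ (i : ℕ)) with hBddef
  set An : ℕ := ∏ i ∈ Finset.range d, (q ^ (2 * d - i) - q ^ i) with hAndef
  set An' : ℕ := ∏ i ∈ Finset.range d, (q ^ (2 * d - i) - q ^ d) with hAn'def
  -- L * Bd = An
  have hLag_bot : Nat.card (LagT F d (⊥ : Submodule F (VV F d))) = L := by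
    rw [hLdef]
    exact Nat.card_congr (Equiv.subtypeEquivRight (fun W =>
      ⟨fun h => ⟨h.1, h.2.1⟩, fun h => ⟨h.1, h.2, disjoint_bot_left⟩⟩))
  have hL : L * Bd = An := by
    rw [← hLag_bot, ← card_Fr_eq, card_Fr_bot']
  -- per-U count
  have hU : ∀ U : Submodule F (VV F d), p U → Nat.card (LagT F d U) * Bd = An' := by
    intro U hpU
    rw [← card_Fr_eq, card_Fr_lagr hpU.1 hpU.2]
  -- total pairs
  have hT : Nat.card {P : Submodule F (VV F d) × Submodule F (VV F d) //
      IsIsotropic F d P.1 ∧ finrank F P.1 = d ∧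
      IsIsotropic F d P.2 ∧ finrank F P.2 = d} = L * L := by
    have e1 : {P : Submodule F (VV F d) × Submodule F (VV F d) //
        IsIsotropic F d P.1 ∧ finrank F P.1 = d ∧
        IsIsotropic F d P.2 ∧ finrank F P.2 = d} ≃
        {W : Submodule F (VV F d) // p W} × {W : Submodule F (VV F d) // p W} :=
      (Equiv.subtypeEquivRight (fun P => by rw [hp]; tauto)).trans
        (Equiv.subtypeProdEquivProd)
    rw [Nat.card_congr e1, Nat.card_prod]
  -- good pairs
  have eG : {P : Submodule F (VV F d) × Submodule F (VV F d) //
      (IsIsotropic F d P.1 ∧ finrank F P.1 = d ∧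
        IsIsotropic F d P.2 ∧ finrank F P.2 = d) ∧ P.1 ⊓ P.2 = ⊥} ≃
      Σ U : {W : Submodule F (VV F d) // p W}, LagT F d U.1 :=
    { toFun := fun P => ⟨⟨P.1.1, P.2.1.1, P.2.1.2.1⟩,
        ⟨P.1.2, P.2.1.2.2.1, P.2.1.2.2.2, disjoint_iff.2 P.2.2⟩⟩
      invFun := fun s => ⟨(s.1.1, s.2.1),
        ⟨⟨s.1.2.1, s.1.2.2, s.2.2.1, s.2.2.2.1⟩, disjoint_iff.1 s.2.2.2.2⟩⟩
      left_inv := fun P => rfl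
      right_inv := fun s => rfl }
  have hFinp : Fintype {W : Submodule F (VV F d) // p W} := Fintype.ofFinite _
  have hG : Nat.card {P : Submodule F (VV F d) × Submodule F (VV F d) //
      (IsIsotropic F d P.1 ∧ finrank F P.1 = d ∧
        IsIsotropic F d P.2 ∧ finrank F P.2 = d) ∧ P.1 ⊓ P.2 = ⊥} * Bd = L * An' := by
    rw [Nat.card_congr eG, nat_card_sigma, Finset.sum_mul]
    rw [Finset.sum_congr rfl (fun U _ => hU U.1 U.2)]
    rw [Finset.sum_const, smul_eq_mul, Finset.card_univ, hLdef, Nat.card_eq_fintype_card]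
  -- positivity
  have hq1 : 1 ≤ q := le_trans (by norm_num) hq2
  have hBd0 : 0 < Bd := by
    rw [hBddef]
    apply Finset.prod_pos
    intro i _
    have : q ^ (i : ℕ) < q ^ d := Nat.pow_lt_pow_right hq2 i.isLt
    omega
  -- casts
  have hrr : (2:ℝ) ≤ (q:ℝ) := by exact_mod_cast hq2
  have castAn : (An : ℝ) = ∏ i ∈ Finset.range d, ((q:ℝ) ^ (2 * d - i) - (q:ℝ) ^ i) := by
    rw [hAndef, Nat.cast_prod]
    refine Finset.prod_congr rfl fun i hi => ?_
    rw [Finset.mem_range] at hi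
    rw [Nat.cast_sub (Nat.pow_le_pow_right hq1 (by omega))]
    push_cast; ring
  have castAn' : (An' : ℝ) = ∏ i ∈ Finset.range d, ((q:ℝ) ^ (2 * d - i) - (q:ℝ) ^ d) := by
    rw [hAn'def, Nat.cast_prod]
    refine Finset.prod_congr rfl fun i hi => ?_
    rw [Finset.mem_range] at hi
    rw [Nat.cast_sub (Nat.pow_le_pow_right hq1 (by omega))]
    push_cast; ring
  have hnum : (1 - 4 / (q:ℝ)) * (An : ℝ) ≤ (An' : ℝ) := by
    rw [castAn, castAn']
    exact num_ineq hrr d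
  -- final inequality
  have hBdR : (0:ℝ) < (Bd : ℝ) := by exact_mod_cast hBd0
  rw [← mul_le_mul_iff_of_pos_right hBdR]
  have hgr : (Nat.card {P : Submodule F (VV F d) × Submodule F (VV F d) //
      (IsIsotropic F d P.1 ∧ finrank F P.1 = d ∧
        IsIsotropic F d P.2 ∧ finrank F P.2 = d) ∧ P.1 ⊓ P.2 = ⊥} : ℝ) * (Bd : ℝ)
      = (L : ℝ) * (An' : ℝ) := by exact_mod_cast congrArg (Nat.cast : ℕ → ℝ) hG
  have hlr : ((L : ℝ) * (Bd : ℝ)) = (An : ℝ) := by exact_mod_cast congrArg (Nat.cast : ℕ → ℝ) hL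
  rw [hgr, hT]
  push_cast
  have hL0 : (0:ℝ) ≤ (L:ℝ) := Nat.cast_nonneg _
  calc (1 - 4 / (q:ℝ)) * ((L:ℝ) * (L:ℝ)) * (Bd:ℝ)
      = (L:ℝ) * ((1 - 4 / (q:ℝ)) * ((L:ℝ) * (Bd:ℝ))) := by ring
    _ = (L:ℝ) * ((1 - 4 / (q:ℝ)) * (An:ℝ)) := by rw [hlr]
    _ ≤ (L:ℝ) * (An':ℝ) := mul_le_mul_of_nonneg_left hnum hL0
end Final
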